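/- The following are equivalent for a class K of L-structures: (1) K is equationally Noetherian; (2) for every n, the K-radical congruences of T(x₁,…,xₙ) (intersections of families of members of Spec_K(T(x₁,…,xₙ))) satisfy the ascending chain condition, equivalently the Zariski closed subsets of Spec_K(T(x₁,…,xₙ)) satisfy the descending chain condition; (3) for every n, the closed sets of the Zariski topology on Spec_K(T(x₁,…,xₙ)) satisfy the descending chain condition. -/

import Mathlib

open FirstOrder FirstOrder.Language Topology

universe u v w x y

/-- A congruence on an `L`-structure `A`, viewed as a set of pairs: an equivalence
relation respected by the interpretation of every function symbol. -/
def IsCong (L : FirstOrder.Language.{v, w}) (A : Type*) [L.Structure A]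
    (θ : Set (A × A)) : Prop :=
  (∀ a : A, (a, a) ∈ θ) ∧
  (∀ a b : A, (a, b) ∈ θ → (b, a) ∈ θ) ∧
  (∀ a b c : A, (a, b) ∈ θ → (b, c) ∈ θ → (a, c) ∈ θ) ∧
  ∀ (n : ℕ) (f : L.Functions n) (y z : Fin n → A),
    (∀ i, (y i, z i) ∈ θ) →
      (Structure.funMap f y, Structure.funMap f z) ∈ θ

/-- The setoid associated to a congruence. -/
def congSetoid {L : FirstOrder.Language.{v, w}} {A : Type*} [L.Structure A]
    (θ : Set (A × A)) (hθ : IsCong L A θ) : Setoid A :=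
  ⟨fun a b => (a, b) ∈ θ,
    ⟨fun a => hθ.1 a, fun h => hθ.2.1 _ _ h, fun h h' => hθ.2.2.1 _ _ _ h h'⟩⟩

/-- The natural `L`-structure on the quotient `A/θ` of `A` by a congruence `θ`. -/
noncomputable instance congQuotStructure {L : FirstOrder.Language.{v, w}} [L.IsAlgebraic]
    {A : Type*} [L.Structure A] {θ : Set (A × A)} {hθ : IsCong L A θ} :
    L.Structure (Quotient (congSetoid θ hθ)) where
  funMap {_} f q := Quotient.mk (congSetoid θ hθ)
    (Structure.funMap f fun i => (q i).out)
  RelMap {_} r _ := isEmptyElim r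

/-- The kernel of a map, as a set of pairs. -/
def mapKer {A : Type*} {B : Type*} (h : A → B) : Set (A × A) :=
  {p : A × A | h p.1 = h p.2}

/-- The preimage of a set of pairs under a map. -/
def pairPreimage {A : Type*} {B : Type*} (h : A → B) (θ : Set (B × B)) : Set (A × A) :=
  {p : A × A | (h p.1, h p.2) ∈ θ}

/-- The pushforward `ψ/θ = {(a/θ, a'/θ) : (a, a') ∈ ψ}` of a set of pairs to the
quotient by the congruence `θ`. -/
def quotPush {L : FirstOrder.Language.{v, w}} {A : Type*} [L.Structure A]
    (θ : Set (A × A)) (hθ : IsCong L A θ) (ψ : Set (A × A)) :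
    Set (Quotient (congSetoid θ hθ) × Quotient (congSetoid θ hθ)) :=
  {p | ∃ a a' : A, Quotient.mk (congSetoid θ hθ) a = p.1 ∧
        Quotient.mk (congSetoid θ hθ) a' = p.2 ∧ (a, a') ∈ ψ}

/-- The `K`-spectrum of `A`: the set of kernels of homomorphisms from `A` into
members of the class `K` (equivalently, the set of congruences `θ` on `A` such that
`A/θ` embeds into a member of `K`). -/
def SpecK {L : FirstOrder.Language.{v, w}} (K : ∀ B : Type u, L.Structure B → Prop)
    (A : Type*) [L.Structure A] : Set (Set (A × A)) :=
  {θ | ∃ (B : Type u) (iB : L.Structure B), K B iB ∧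
        ∃ h : @Language.Hom L A B _ iB, θ = mapKer h.toFun}

/-- The diagonal congruence on `A`. -/
def diagCong (A : Type*) : Set (A × A) := {p : A × A | p.1 = p.2}

/-- `A` is `K`-reduced: the intersection of all congruences in `Spec_K A` is the diagonal. -/
def IsKReduced {L : FirstOrder.Language.{v, w}} (K : ∀ B : Type u, L.Structure B → Prop)
    (A : Type*) [L.Structure A] : Prop :=
  ⋂₀ SpecK K A = diagCong A

/-- A `K`-radical congruence: an intersection of a (possibly empty) family of members
of `Spec_K A` (the empty intersection being `A × A`). -/
def IsKRadical {L : FirstOrder.Language.{v, w}} (K : ∀ B : Type u, L.Structure B → Prop)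
    (A : Type*) [L.Structure A] (θ : Set (A × A)) : Prop :=
  ∃ F : Set (Set (A × A)), F ⊆ SpecK K A ∧ θ = ⋂₀ F

/-- The Zariski closed subset of the `K`-spectrum determined by `S ⊆ A × A`. -/
def VClosed {L : FirstOrder.Language.{v, w}} (K : ∀ B : Type u, L.Structure B → Prop)
    (A : Type*) [L.Structure A] (S : Set (A × A)) : Set (Set (A × A)) :=
  {θ ∈ SpecK K A | S ⊆ θ}

/-- The `K`-radical of a set of pairs `S`. -/
def radK {L : FirstOrder.Language.{v, w}} (K : ∀ B : Type u, L.Structure B → Prop)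
    (A : Type*) [L.Structure A] (S : Set (A × A)) : Set (A × A) :=
  ⋂₀ VClosed K A S

/-- The Zariski closed subset of the `K`-spectrum (as a subtype) determined by `S`. -/
def VZar {L : FirstOrder.Language.{v, w}} (K : ∀ B : Type u, L.Structure B → Prop)
    (A : Type*) [L.Structure A] (S : Set (A × A)) : Set {θ // θ ∈ SpecK K A} :=
  {θ | S ⊆ (θ : Set (A × A))}

/-- The Zariski topology on the `K`-spectrum of `A`: the closed sets are the arbitrary
intersections of finite unions of Zariski closed sets `VZar K A S`. -/
def zariskiTopology {L : FirstOrder.Language.{v, w}} (K : ∀ B : Type u, L.Structure B → Prop)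
    (A : Type*) [L.Structure A] : TopologicalSpace {θ // θ ∈ SpecK K A} :=
  TopologicalSpace.generateFrom {U | ∃ S : Set (A × A), U = (VZar K A S)ᶜ}

/-- A product structure on a dependent function type. -/
instance piStructure {L : FirstOrder.Language.{v, w}} [L.IsAlgebraic]
    {ι : Type*} {B : ι → Type*} [∀ i, L.Structure (B i)] :
    L.Structure (∀ i, B i) where
  funMap {_} f q i := Structure.funMap f fun j => q j i
  RelMap {_} r _ := isEmptyElim r

/-- `A` embeds into a direct product of a (possibly empty) family of members of `K`. -/
def EmbedsInProduct {L : FirstOrder.Language.{v, w}} [L.IsAlgebraic]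
    (K : ∀ B : Type u, L.Structure B → Prop) (A : Type*) [L.Structure A] : Prop :=
  ∃ (ι : Type u) (B : ι → Type u) (iB : ∀ i, L.Structure (B i)),
    (∀ i, K (B i) (iB i)) ∧
      Nonempty (@Language.Embedding L A (∀ i, B i) _ (@piStructure L _ ι B iB))

/-- The term-algebra structure on `L.Term α`. -/
instance termStructure {L : FirstOrder.Language.{v, w}} [L.IsAlgebraic] {α : Type x} :
    L.Structure (L.Term α) where
  funMap {_} f q := Term.func f q
  RelMap {_} r _ := isEmptyElim r

/-- Evaluation of a term at an assignment `a : X → A`, for an explicitly given structure. -/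
def evalAt {L : FirstOrder.Language.{v, w}} {A : Type*} (iA : L.Structure A)
    {X : Type x} (a : X → A) : L.Term X → A :=
  letI := iA; fun t => Term.realize a t

/-- An equation (pair of terms) holds at an assignment `a`. -/
def EqHolds {L : FirstOrder.Language.{v, w}} {A : Type*} (iA : L.Structure A)
    {X : Type x} (a : X → A) (pq : L.Term X × L.Term X) : Prop :=
  evalAt iA a pq.1 = evalAt iA a pq.2

/-- `K` is equationally Noetherian. -/
def EqNoetherian {L : FirstOrder.Language.{v, w}}
    (K : ∀ B : Type u, L.Structure B → Prop) : Prop :=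
  ∀ (n : ℕ) (T : Set (L.Term (Fin n) × L.Term (Fin n))),
    ∃ T₀ ⊆ T, T₀.Finite ∧
      ∀ (A : Type u) (iA : L.Structure A), K A iA → ∀ a : Fin n → A,
        (∀ pq ∈ T₀, EqHolds iA a pq) → ∀ pq ∈ T, EqHolds iA a pq

/-- `A` is discriminated by `K`: every finite subset is separated injectively by a
homomorphism into a member of `K`. -/
def DiscriminatedBy {L : FirstOrder.Language.{v, w}}
    (K : ∀ B : Type u, L.Structure B → Prop) (A : Type*) [iA : L.Structure A] : Prop :=
  ∀ W : Set A, W.Finite → ∃ (B : Type u) (iB : L.Structure B), K B iB ∧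
    ∃ h : @Language.Hom L A B _ iB, Set.InjOn h.toFun W

/-- `A` is `n`-separated by `K` for every `n`. -/
def NSeparatedBy {L : FirstOrder.Language.{v, w}}
    (K : ∀ B : Type u, L.Structure B → Prop) (A : Type*) [iA : L.Structure A] : Prop :=
  ∀ (n : ℕ) (a b : Fin n → A), (∀ i, a i ≠ b i) →
    ∃ (B : Type u) (iB : L.Structure B), K B iB ∧
      ∃ h : @Language.Hom L A B _ iB, ∀ i, h.toFun (a i) ≠ h.toFun (b i)

/-- Any member of the `K`-spectrum is a congruence. -/
theorem isCong_of_mem_specK {L : FirstOrder.Language.{v, w}}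
    {K : ∀ B : Type u, L.Structure B → Prop} {A : Type*} [L.Structure A]
    {θ : Set (A × A)} (hθ : θ ∈ SpecK K A) : IsCong L A θ := by
  obtain ⟨B, iB, -, h, rfl⟩ := hθ
  refine ⟨fun a => rfl, fun a b hab => hab.symm, fun a b c hab hbc => hab.trans hbc,
    fun n f y z hyz => ?_⟩
  show h.toFun _ = h.toFun _
  have hy := @Language.Hom.map_fun' L A B _ iB h n f y
  have hz := @Language.Hom.map_fun' L A B _ iB h n f z
  rw [hy, hz]
  exact congrArg _ (funext fun i => hyz i)

/-- An arbitrary intersection of congruences is a congruence. -/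
theorem isCong_sInter {L : FirstOrder.Language.{v, w}} {A : Type*} [L.Structure A]
    {X : Set (Set (A × A))} (hX : ∀ θ ∈ X, IsCong L A θ) : IsCong L A (⋂₀ X) :=
  ⟨fun a θ hθ => (hX θ hθ).1 a,
   fun a b hab θ hθ => (hX θ hθ).2.1 a b (hab θ hθ),
   fun a b c hab hbc θ hθ => (hX θ hθ).2.2.1 a b c (hab θ hθ) (hbc θ hθ),
   fun n f y z hyz θ hθ => (hX θ hθ).2.2.2 n f y z (fun i => hyz i θ hθ)⟩


section ChainLemmas
variable {α : Type*}

/-- Chain stabilization for all descending chains in a family implies the minimal condition. -/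
theorem minOn_of_chains (F : Set (Set α))
    (h : ∀ c : ℕ → Set α, (∀ m, c m ∈ F) → (∀ m, c (m + 1) ⊆ c m) →
      ∃ N, ∀ m, N ≤ m → c m = c N) :
    ∀ G ⊆ F, G.Nonempty → ∃ M ∈ G, ∀ C ∈ G, C ⊆ M → C = M := by
  intro G hGF hG
  by_contra hmin
  push_neg at hmin
  have step : ∀ C ∈ G, ∃ C' ∈ G, C' ⊂ C := by
    intro C hC
    obtain ⟨C', hC', hsub, hne⟩ := hmin C hC
    exact ⟨C', hC', hsub, fun h' => hne (le_antisymm hsub h')⟩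
  choose f hf₁ hf₂ using step
  obtain ⟨C₀, hC₀⟩ := hG
  let g : ℕ → {C // C ∈ G} := fun m => Nat.rec ⟨C₀, hC₀⟩ (fun _ p => ⟨f p.1 p.2, hf₁ p.1 p.2⟩) m
  have hdesc : ∀ m, (g (m + 1)).1 ⊂ (g m).1 := fun m => hf₂ _ _
  obtain ⟨N, hN⟩ := h (fun m => (g m).1) (fun m => hGF (g m).2)
    (fun m => (hdesc m).1)
  exact (hdesc N).2 ((hN (N + 1) (Nat.le_succ N)) ▸ subset_rfl)

/-- Minimal condition implies chain stabilization. -/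
theorem chains_of_minOn (F : Set (Set α))
    (h : ∀ G ⊆ F, G.Nonempty → ∃ M ∈ G, ∀ C ∈ G, C ⊆ M → C = M)
    (c : ℕ → Set α) (hc : ∀ m, c m ∈ F) (hd : ∀ m, c (m + 1) ⊆ c m) :
    ∃ N, ∀ m, N ≤ m → c m = c N := by
  obtain ⟨M, ⟨N, rfl⟩, hM⟩ := h (Set.range c) (Set.range_subset_iff.2 hc) ⟨c 0, 0, rfl⟩
  refine ⟨N, fun m hm => hM (c m) ⟨m, rfl⟩ ?_⟩
  clear hM
  induction m, hm using Nat.le_induction with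
  | base => exact subset_rfl
  | succ m hm ih => exact (hd m).trans ih

theorem antitone_chain {c : ℕ → Set α} (hd : ∀ m, c (m + 1) ⊆ c m) :
    ∀ {m m'}, m ≤ m' → c m' ⊆ c m := by
  intro m m' hm
  induction m', hm using Nat.le_induction with
  | base => exact subset_rfl
  | succ k hk ih => exact (hd k).trans ih

end ChainLemmas

section FinUnionMachine
variable {α : Type*}

theorem antitone_chain' {c : ℕ → Set α} (hd : ∀ m, c (m + 1) ⊆ c m) :
    ∀ {m m'}, m ≤ m' → c m' ⊆ c m := by
  intro m m' hm
  induction m', hm using Nat.le_induction with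
  | base => exact subset_rfl
  | succ k hk ih => exact (hd k).trans ih

/-- The family of finite unions of members of `𝒜`. -/
def FinUnions (𝒜 : Set (Set α)) : Set (Set α) :=
  {C | ∃ G : Set (Set α), G.Finite ∧ G ⊆ 𝒜 ∧ C = ⋃₀ G}

variable {𝒜 : Set (Set α)} (hInter : ∀ G ⊆ 𝒜, ⋂₀ G ∈ 𝒜)

theorem mem_finUnions_of_mem {C : Set α} (hC : C ∈ 𝒜) : C ∈ FinUnions 𝒜 :=
  ⟨{C}, Set.finite_singleton C, Set.singleton_subset_iff.2 hC, (Set.sUnion_singleton C).symm⟩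

theorem empty_mem_finUnions : (∅ : Set α) ∈ FinUnions 𝒜 :=
  ⟨∅, Set.finite_empty, Set.empty_subset _, Set.sUnion_empty.symm⟩

theorem union_mem_finUnions {C D : Set α} (hC : C ∈ FinUnions 𝒜) (hD : D ∈ FinUnions 𝒜) :
    C ∪ D ∈ FinUnions 𝒜 := by
  obtain ⟨G₁, h₁f, h₁s, rfl⟩ := hC
  obtain ⟨G₂, h₂f, h₂s, rfl⟩ := hD
  exact ⟨G₁ ∪ G₂, h₁f.union h₂f, Set.union_subset h₁s h₂s, (Set.sUnion_union G₁ G₂).symm⟩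

include hInter

theorem inter_mem_base {C D : Set α} (hC : C ∈ 𝒜) (hD : D ∈ 𝒜) : C ∩ D ∈ 𝒜 := by
  have := hInter {C, D} (by rintro E (rfl | rfl) <;> assumption)
  rwa [Set.sInter_pair] at this

theorem univ_mem_base : (Set.univ : Set α) ∈ 𝒜 := by
  have := hInter ∅ (Set.empty_subset _)
  rwa [Set.sInter_empty] at this

theorem inter_base_mem_finUnions {C D : Set α} (hC : C ∈ FinUnions 𝒜) (hD : D ∈ 𝒜) :
    C ∩ D ∈ FinUnions 𝒜 := by
  obtain ⟨G, hf, hs, rfl⟩ := hC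
  refine ⟨(fun E => E ∩ D) '' G, hf.image _, ?_, ?_⟩
  · rintro _ ⟨E, hE, rfl⟩
    exact inter_mem_base hInter (hs hE) hD
  · ext θ
    simp only [Set.mem_inter_iff, Set.mem_sUnion, Set.mem_image]
    constructor
    · rintro ⟨⟨E, hE, hθE⟩, hθD⟩
      exact ⟨E ∩ D, ⟨E, hE, rfl⟩, hθE, hθD⟩
    · rintro ⟨_, ⟨E, hE, rfl⟩, hθE, hθD⟩
      exact ⟨⟨E, hE, hθE⟩, hθD⟩

theorem inter_mem_finUnions {C D : Set α} (hC : C ∈ FinUnions 𝒜) (hD : D ∈ FinUnions 𝒜) :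
    C ∩ D ∈ FinUnions 𝒜 := by
  obtain ⟨G, hf, hs, rfl⟩ := hD
  refine Set.Finite.induction_on
    (motive := fun G _ => G ⊆ 𝒜 → C ∩ ⋃₀ G ∈ FinUnions 𝒜) _ hf
    (fun _ => by simpa using empty_mem_finUnions) ?_ hs
  intro E G hEG hGfin ih hs
  rw [Set.sUnion_insert, Set.inter_union_distrib_left]
  exact union_mem_finUnions (inter_base_mem_finUnions hInter hC (hs (Set.mem_insert E G)))
    (ih fun F hF => hs (Set.mem_insert_of_mem E hF))

end FinUnionMachine

section WF
variable {α : Type*} {𝒜 : Set (Set α)}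
  (hInter : ∀ G ⊆ 𝒜, ⋂₀ G ∈ 𝒜)
  (hmin : ∀ G ⊆ 𝒜, G.Nonempty → ∃ M ∈ G, ∀ C ∈ G, C ⊆ M → C = M)

include hmin

theorem wf_base : WellFounded (fun x y : {C // C ∈ 𝒜} => x.1 ⊂ y.1) := by
  rw [WellFounded.wellFounded_iff_has_min]
  intro s hs
  obtain ⟨M, ⟨⟨Mv, hMv⟩, hMs, rfl⟩, hMmin⟩ :=
    hmin (Subtype.val '' s) (by rintro _ ⟨⟨C, hC⟩, _, rfl⟩; exact hC)
      (hs.image Subtype.val)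
  refine ⟨⟨Mv, hMv⟩, hMs, fun x hx hxM => ?_⟩
  exact hxM.2 ((hMmin x.1 ⟨x, hx, rfl⟩ hxM.1) ▸ subset_rfl)

include hInter

/-- Descending chains of finite unions of members of `𝒜` stabilize. -/
theorem finUnions_chains (c : ℕ → Set α) (hc : ∀ m, c m ∈ FinUnions 𝒜)
    (hd : ∀ m, c (m + 1) ⊆ c m) : ∃ N, ∀ m, N ≤ m → c m = c N := by
  have main : ∀ x : {C // C ∈ 𝒜}, ∀ c : ℕ → Set α, (∀ m, c m ∈ FinUnions 𝒜) →
      (∀ m, c (m + 1) ⊆ c m) → c 0 ⊆ x.1 → ∃ N, ∀ m, N ≤ m → c m = c N := by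
    intro x
    induction x using WellFounded.induction (wf_base hmin) with
    | _ x IH =>
    intro c hc hd hc0
    by_cases hA : ∃ k, ∃ G : Set (Set α), G.Finite ∧ G ⊆ 𝒜 ∧ c k = ⋃₀ G ∧ ∀ D ∈ G, D ⊂ x.1
    · obtain ⟨k, G, hGfin, hG𝒜, hck, hGlt⟩ := hA
      have key : ∀ D ∈ G, ∃ N, ∀ m, N ≤ m → c (k + m) ∩ D = c (k + N) ∩ D := by
        intro D hD
        exact IH ⟨D, hG𝒜 hD⟩ (hGlt D hD) (fun m => c (k + m) ∩ D)
          (fun m => inter_base_mem_finUnions hInter (hc (k + m)) (hG𝒜 hD))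
          (fun m => Set.inter_subset_inter_left D (hd (k + m)))
          Set.inter_subset_right
      choose! ND hND using key
      set N₀ := hGfin.toFinset.sup ND with hN₀def
      have hNDle : ∀ D ∈ G, ND D ≤ N₀ := fun D hD =>
        Finset.le_sup (hGfin.mem_toFinset.2 hD)
      refine ⟨k + N₀, fun m hm => ?_⟩
      obtain ⟨j, rfl⟩ : ∃ j, m = k + j := ⟨m - k, by omega⟩
      have hjN : N₀ ≤ j := by omega
      have sub1 : ∀ j', c (k + j') ⊆ ⋃₀ G := fun j' =>
        hck ▸ antitone_chain' hd (Nat.le_add_right k j')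
      ext θ
      constructor
      · intro hθ
        obtain ⟨D, hD, hθD⟩ := sub1 j hθ
        have h1 : θ ∈ c (k + j) ∩ D := ⟨hθ, hθD⟩
        rw [hND D hD j (le_trans (hNDle D hD) hjN)] at h1
        rw [← hND D hD N₀ (hNDle D hD)] at h1
        exact h1.1
      · intro hθ
        obtain ⟨D, hD, hθD⟩ := sub1 N₀ hθ
        have h1 : θ ∈ c (k + N₀) ∩ D := ⟨hθ, hθD⟩
        rw [hND D hD N₀ (hNDle D hD)] at h1
        rw [← hND D hD j (le_trans (hNDle D hD) hjN)] at h1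
        exact h1.1
    · push_neg at hA
      refine ⟨0, fun m _ => ?_⟩
      have hall : ∀ k, c k = x.1 := by
        intro k
        obtain ⟨G, hGfin, hG𝒜, hck⟩ := hc k
        obtain ⟨D, hD, hDlt⟩ := hA k G hGfin hG𝒜 hck
        have hck' : c k ⊆ x.1 := (antitone_chain' hd (Nat.zero_le k)).trans hc0
        have hDsub : D ⊆ x.1 := (hck ▸ Set.subset_sUnion_of_mem hD).trans hck'
        have hDeq : D = x.1 := by
          by_contra hne
          exact hDlt ⟨hDsub, fun h => hne (le_antisymm hDsub h)⟩
        exact le_antisymm hck' (hDeq ▸ hck ▸ Set.subset_sUnion_of_mem hD)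
      rw [hall m, hall 0]
  exact main ⟨Set.univ, univ_mem_base hInter⟩ c hc hd (Set.subset_univ _)

/-- The minimal condition for finite unions of members of `𝒜`. -/
theorem finUnions_min : ∀ G ⊆ FinUnions 𝒜, G.Nonempty →
    ∃ M ∈ G, ∀ C ∈ G, C ⊆ M → C = M :=
  minOn_of_chains _ (finUnions_chains hInter hmin)

/-- `FinUnions 𝒜` is closed under arbitrary intersections. -/
theorem sInter_mem_finUnions {𝔊 : Set (Set α)} (h𝔊 : 𝔊 ⊆ FinUnions 𝒜) :
    ⋂₀ 𝔊 ∈ FinUnions 𝒜 := by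
  classical
  set D : Set (Set α) := {C | ∃ G' : Set (Set α), G'.Finite ∧ G' ⊆ 𝔊 ∧ C = ⋂₀ G'} with hDdef
  have hDB : D ⊆ FinUnions 𝒜 := by
    rintro _ ⟨G', hG'fin, hG'sub, rfl⟩
    revert hG'sub
    refine Set.Finite.induction_on
      (motive := fun G' _ => G' ⊆ 𝔊 → ⋂₀ G' ∈ FinUnions 𝒜) _ hG'fin (fun _ => ?_) ?_
    · rw [Set.sInter_empty]
      exact mem_finUnions_of_mem (univ_mem_base hInter)
    · intro E G' hEG' hG'fin ih hsub
      rw [Set.sInter_insert]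
      exact inter_mem_finUnions hInter (h𝔊 (hsub (Set.mem_insert E G')))
        (ih fun F hF => hsub (Set.mem_insert_of_mem E hF))
  obtain ⟨M, hMD, hMmin⟩ := finUnions_min hInter hmin D hDB
    ⟨Set.univ, ∅, Set.finite_empty, Set.empty_subset _, Set.sInter_empty.symm⟩
  obtain ⟨G₀, hG₀fin, hG₀sub, rfl⟩ := hMD
  have hMle : ∀ W ∈ 𝔊, ⋂₀ G₀ ⊆ W := by
    intro W hW
    have h1 : ⋂₀ G₀ ∩ W ∈ D :=
      ⟨insert W G₀, hG₀fin.insert W, Set.insert_subset hW hG₀sub, by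
        rw [Set.sInter_insert, Set.inter_comm]⟩
    have := hMmin _ h1 Set.inter_subset_left
    rw [← this]
    exact Set.inter_subset_right
  have : ⋂₀ 𝔊 = ⋂₀ G₀ := by
    apply le_antisymm
    · exact Set.sInter_subset_sInter hG₀sub
    · exact Set.subset_sInter hMle
  rw [this]
  exact hDB ⟨G₀, hG₀fin, hG₀sub, rfl⟩

end WF

section ModelLemmas
variable {L : FirstOrder.Language.{v, w}} [L.IsAlgebraic]

/-- The homomorphism from the term algebra determined by an assignment. -/
def assignHom {B : Type*} (iB : L.Structure B) {α : Type x} (a : α → B) :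
    @Language.Hom L (L.Term α) B termStructure iB where
  toFun := evalAt iB a
  map_fun' := by
    intro n f ts
    letI := iB
    show Term.realize a (Term.func f ts) = _
    rfl
  map_rel' := by
    intro n r
    exact isEmptyElim r

theorem hom_eq_realize {B : Type*} {iB : L.Structure B} {α : Type x}
    (h : @Language.Hom L (L.Term α) B termStructure iB) (t : L.Term α) :
    h.toFun t = evalAt iB (fun i => h.toFun (Term.var i)) t := by
  letI := iB
  induction t with
  | var i => rfl
  | func f ts ih =>
    have h1 := @Language.Hom.map_fun' L (L.Term α) B termStructure iB h _ f ts
    show h.toFun (Structure.funMap f ts) = _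
    rw [h1]
    show _ = Term.realize _ (Term.func f ts)
    simp only [Term.realize]
    exact congrArg _ (funext fun i => ih i)
end ModelLemmas

section RadLemmas
variable {L : FirstOrder.Language.{v, w}} (K : ∀ B : Type u, L.Structure B → Prop)
  (A : Type y) [L.Structure A]

theorem subset_radK (S : Set (A × A)) : S ⊆ radK K A S :=
  fun p hp => Set.mem_sInter.2 fun _ hθ => hθ.2 hp

theorem radK_isKRadical (S : Set (A × A)) : IsKRadical K A (radK K A S) :=
  ⟨VClosed K A S, fun _ hθ => hθ.1, rfl⟩

theorem radK_eq_self_of_radical {θ : Set (A × A)} (hθ : IsKRadical K A θ) :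
    radK K A θ = θ := by
  obtain ⟨F, hF, rfl⟩ := hθ
  refine le_antisymm ?_ (subset_radK K A _)
  intro p hp ψ hψ
  exact Set.mem_sInter.1 hp ψ ⟨hF hψ, Set.sInter_subset_of_mem hψ⟩

theorem vClosed_radK (S : Set (A × A)) : VClosed K A (radK K A S) = VClosed K A S := by
  ext θ
  constructor
  · rintro ⟨hθ, hsub⟩
    exact ⟨hθ, (subset_radK K A S).trans hsub⟩
  · rintro ⟨hθ, hsub⟩
    exact ⟨hθ, fun p hp => Set.mem_sInter.1 hp θ ⟨hθ, hsub⟩⟩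

theorem vClosed_antitone {S S' : Set (A × A)} (h : S ⊆ S') :
    VClosed K A S' ⊆ VClosed K A S := fun θ hθ => ⟨hθ.1, h.trans hθ.2⟩

theorem vClosed_eq_image (S : Set (A × A)) :
    VClosed K A S = Subtype.val '' (VZar K A S) := by
  ext θ
  constructor
  · rintro ⟨hθ, hsub⟩
    exact ⟨⟨θ, hθ⟩, hsub, rfl⟩
  · rintro ⟨⟨ψ, hψ⟩, hsub, rfl⟩
    exact ⟨hψ, hsub⟩

theorem vZar_eq_preimage (S : Set (A × A)) :
    VZar K A S = Subtype.val ⁻¹' (VClosed K A S) := by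
  ext ⟨θ, hθ⟩
  exact ⟨fun h => ⟨hθ, h⟩, fun h => h.2⟩

theorem vZar_sInter {G : Set (Set {θ // θ ∈ SpecK K A})} (hG : G ⊆ Set.range (VZar K A)) :
    ⋂₀ G ∈ Set.range (VZar K A) := by
  refine ⟨⋃₀ {S | VZar K A S ∈ G}, ?_⟩
  ext θ
  rw [Set.mem_sInter]
  constructor
  · intro h C hC
    obtain ⟨S, rfl⟩ := hG hC
    exact fun p hp => h (Set.mem_sUnion.2 ⟨S, hC, hp⟩)
  · intro h p hp
    obtain ⟨S, hS, hpS⟩ := Set.mem_sUnion.1 hp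
    exact h (VZar K A S) hS hpS

theorem vZar_isClosed (S : Set (A × A)) :
    IsClosed[zariskiTopology K A] (VZar K A S) := by
  letI := zariskiTopology K A
  rw [← isOpen_compl_iff]
  exact TopologicalSpace.GenerateOpen.basic _ ⟨S, rfl⟩

end RadLemmas

section MoreChain
variable {α : Type*}
theorem monotone_chain {c : ℕ → Set α} (hd : ∀ m, c m ⊆ c (m + 1)) :
    ∀ {m m'}, m ≤ m' → c m ⊆ c m' := by
  intro m m' hm
  induction m', hm using Nat.le_induction with
  | base => exact subset_rfl
  | succ k hk ih => exact ih.trans (hd k)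

theorem finite_subset_chain {c : ℕ → Set α} (hmono : ∀ m, c m ⊆ c (m + 1))
    {T₀ : Set α} (hfin : T₀.Finite) (hsub : T₀ ⊆ ⋃ m, c m) : ∃ N, T₀ ⊆ c N := by
  revert hsub
  refine Set.Finite.induction_on (motive := fun T₀ _ => T₀ ⊆ ⋃ m, c m → ∃ N, T₀ ⊆ c N) _ hfin
    (fun _ => ⟨0, Set.empty_subset _⟩) ?_
  intro a s _ _ ih hsub
  obtain ⟨N₁, hN₁⟩ := ih fun p hp => hsub (Set.mem_insert_of_mem a hp)
  obtain ⟨N₂, hN₂⟩ := Set.mem_iUnion.1 (hsub (Set.mem_insert a s))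
  exact ⟨max N₁ N₂, Set.insert_subset (monotone_chain hmono (le_max_right N₁ N₂) hN₂)
    (hN₁.trans (monotone_chain hmono (le_max_left N₁ N₂)))⟩
end MoreChain

theorem radK_mono {L : FirstOrder.Language.{v, w}} (K : ∀ B : Type u, L.Structure B → Prop)
    (A : Type y) [L.Structure A] {S S' : Set (A × A)} (h : S ⊆ S') :
    radK K A S ⊆ radK K A S' :=
  Set.sInter_subset_sInter (vClosed_antitone K A h)

/-- `K` is equationally Noetherian iff for every `n` the `K`-radical
congruences of the term algebra satisfy the A.C.C. (equivalently the Zariski closed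
subsets of its spectrum satisfy the D.C.C.) iff for every `n` the closed sets of the
Zariski topology on the spectrum satisfy the D.C.C. -/
theorem statement14 {L : FirstOrder.Language.{v, w}} [L.IsAlgebraic]
    (K : ∀ B : Type u, L.Structure B → Prop) :
    [EqNoetherian K,
      ∀ (n : ℕ) (c : ℕ → Set (L.Term (Fin n) × L.Term (Fin n))),
        (∀ m, IsKRadical K (L.Term (Fin n)) (c m)) → (∀ m, c m ⊆ c (m + 1)) →
          ∃ N, ∀ m, N ≤ m → c m = c N,
      ∀ (n : ℕ) (c : ℕ → Set (Set (L.Term (Fin n) × L.Term (Fin n)))),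
        (∀ m, ∃ S, c m = VClosed K (L.Term (Fin n)) S) → (∀ m, c (m + 1) ⊆ c m) →
          ∃ N, ∀ m, N ≤ m → c m = c N,
      ∀ (n : ℕ) (c : ℕ → Set {θ // θ ∈ SpecK K (L.Term (Fin n))}),
        (∀ m, IsClosed[zariskiTopology K (L.Term (Fin n))] (c m)) →
          (∀ m, c (m + 1) ⊆ c m) → ∃ N, ∀ m, N ≤ m → c m = c N].TFAE := by
  tfae_have 1 → 2 := by
    intro h1 n c hrad hmono
    obtain ⟨T₀, hT₀T, hT₀fin, hT₀⟩ := h1 n (⋃ m, c m)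
    obtain ⟨N, hN⟩ := finite_subset_chain hmono hT₀fin hT₀T
    refine ⟨N, fun m hm => le_antisymm ?_ (monotone_chain hmono hm)⟩
    obtain ⟨F, hF, hceq⟩ := hrad N
    rw [hceq]
    refine Set.subset_sInter fun θ hθ => ?_
    obtain ⟨B, iB, hKB, h, rfl⟩ := hF hθ
    have hT₀holds : ∀ pq ∈ T₀, EqHolds iB (fun i => h.toFun (Term.var i)) pq := by
      intro pq hpq
      have hmem : pq ∈ mapKer h.toFun := by
        have := hN hpq
        rw [hceq] at this
        exact Set.mem_sInter.1 this _ hθ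
      show evalAt iB _ pq.1 = evalAt iB _ pq.2
      rw [← hom_eq_realize h pq.1, ← hom_eq_realize h pq.2]
      exact hmem
    have hall := hT₀ B iB hKB (fun i => h.toFun (Term.var i)) hT₀holds
    intro pq hpq
    have heq := hall pq (Set.mem_iUnion.2 ⟨m, hpq⟩)
    show h.toFun pq.1 = h.toFun pq.2
    rw [hom_eq_realize h pq.1, hom_eq_realize h pq.2]
    exact heq
  tfae_have 2 → 1 := by
    intro h2 n T
    have key : ∃ T₀ ⊆ T, T₀.Finite ∧ T ⊆ radK K (L.Term (Fin n)) T₀ := by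
      by_contra hcon
      push_neg at hcon
      have step : ∀ S : {S : Set (L.Term (Fin n) × L.Term (Fin n)) // S.Finite ∧ S ⊆ T},
          ∃ pq, pq ∈ T ∧ pq ∉ radK K (L.Term (Fin n)) S.1 := by
        rintro ⟨S, hSfin, hST⟩
        obtain ⟨pq, hpq, hpq'⟩ := Set.not_subset.1 (hcon S hST hSfin)
        exact ⟨pq, hpq, hpq'⟩
      choose g hg₁ hg₂ using step
      let f : ℕ → {S : Set (L.Term (Fin n) × L.Term (Fin n)) // S.Finite ∧ S ⊆ T} :=
        fun m => Nat.rec ⟨∅, Set.finite_empty, Set.empty_subset T⟩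
          (fun _ S => ⟨insert (g S) S.1, S.2.1.insert _, Set.insert_subset (hg₁ S) S.2.2⟩) m
      have hfsucc : ∀ m, (f (m + 1)).1 = insert (g (f m)) (f m).1 := fun m => rfl
      obtain ⟨N, hNstab⟩ := h2 n (fun m => radK K (L.Term (Fin n)) (f m).1)
        (fun m => radK_isKRadical K _ _)
        (fun m => radK_mono K _ (by rw [hfsucc m]; exact Set.subset_insert _ _))
      have h1 : g (f N) ∈ radK K (L.Term (Fin n)) (f (N + 1)).1 :=
        subset_radK K _ _ (by rw [hfsucc N]; exact Set.mem_insert _ _)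
      rw [hNstab (N + 1) (Nat.le_succ N)] at h1
      exact hg₂ (f N) h1
    obtain ⟨T₀, hT₀T, hT₀fin, hT₀rad⟩ := key
    refine ⟨T₀, hT₀T, hT₀fin, ?_⟩
    intro B iB hKB a h₀ pq hpq
    have hker : mapKer (assignHom iB a).toFun ∈ SpecK K (L.Term (Fin n)) :=
      ⟨B, iB, hKB, assignHom iB a, rfl⟩
    have hsub : T₀ ⊆ mapKer (assignHom iB a).toFun := fun pq' hpq' => h₀ pq' hpq'
    exact Set.mem_sInter.1 (hT₀rad hpq) _ ⟨hker, hsub⟩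
  tfae_have 2 → 3 := by
    intro h2 n c hV hdesc
    choose S hS using hV
    obtain ⟨N, hN⟩ := h2 n (fun m => radK K (L.Term (Fin n)) (S m))
      (fun m => radK_isKRadical K _ _)
      (fun m => Set.sInter_subset_sInter (by rw [← hS m, ← hS (m + 1)]; exact hdesc m))
    refine ⟨N, fun m hm => ?_⟩
    have h1 : ∀ k, c k = VClosed K (L.Term (Fin n)) (radK K (L.Term (Fin n)) (S k)) := by
      intro k
      rw [vClosed_radK, ← hS k]
    rw [h1 m, h1 N, hN m hm]
  tfae_have 3 → 2 := by
    intro h3 n c hrad hmono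
    obtain ⟨N, hN⟩ := h3 n (fun m => VClosed K (L.Term (Fin n)) (c m))
      (fun m => ⟨c m, rfl⟩) (fun m => vClosed_antitone K _ (hmono m))
    refine ⟨N, fun m hm => ?_⟩
    have h1 : ∀ k, c k = ⋂₀ VClosed K (L.Term (Fin n)) (c k) := fun k =>
      (radK_eq_self_of_radical K _ (hrad k)).symm
    rw [h1 m, h1 N, hN m hm]
  tfae_have 4 → 3 := by
    intro h4 n c hV hdesc
    choose S hS using hV
    obtain ⟨N, hN⟩ := h4 n (fun m => VZar K (L.Term (Fin n)) (S m))
      (fun m => vZar_isClosed K _ _)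
      (fun m => by
        show VZar K (L.Term (Fin n)) (S (m + 1)) ⊆ VZar K (L.Term (Fin n)) (S m)
        rw [vZar_eq_preimage, vZar_eq_preimage, ← hS m, ← hS (m + 1)]
        exact Set.preimage_mono (hdesc m))
    refine ⟨N, fun m hm => ?_⟩
    rw [hS m, hS N, vClosed_eq_image, vClosed_eq_image, hN m hm]
  tfae_have 3 → 4 := by
    intro h3 n c hclosed hdesc
    set A := L.Term (Fin n)
    set 𝒜 : Set (Set {θ // θ ∈ SpecK K A}) := Set.range (VZar K A) with h𝒜
    have hInter : ∀ G ⊆ 𝒜, ⋂₀ G ∈ 𝒜 := fun G hG => vZar_sInter K A hG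
    have hchains : ∀ d : ℕ → Set {θ // θ ∈ SpecK K A}, (∀ m, d m ∈ 𝒜) →
        (∀ m, d (m + 1) ⊆ d m) → ∃ N, ∀ m, N ≤ m → d m = d N := by
      intro d hd hdd
      choose S hS using fun m => hd m
      obtain ⟨N, hN⟩ := h3 n (fun m => VClosed K A (S m)) (fun m => ⟨S m, rfl⟩)
        (fun m => by
          show VClosed K A (S (m + 1)) ⊆ VClosed K A (S m)
          rw [vClosed_eq_image, vClosed_eq_image, hS m, hS (m + 1)]
          exact Set.image_mono (hdd m))
      refine ⟨N, fun m hm => ?_⟩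
      rw [← hS m, ← hS N, vZar_eq_preimage, vZar_eq_preimage, hN m hm]
    have hmin := minOn_of_chains 𝒜 hchains
    have hBclosed : ∀ C : Set {θ // θ ∈ SpecK K A},
        IsClosed[zariskiTopology K A] C → C ∈ FinUnions 𝒜 := by
      intro C hC
      letI := zariskiTopology K A
      have hopen : TopologicalSpace.GenerateOpen
          {U | ∃ S : Set (A × A), U = (VZar K A S)ᶜ} Cᶜ := hC.isOpen_compl
      have main : ∀ U, TopologicalSpace.GenerateOpen
          {U | ∃ S : Set (A × A), U = (VZar K A S)ᶜ} U → Uᶜ ∈ FinUnions 𝒜 := by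
        intro U hU
        induction hU with
        | basic V hV =>
          obtain ⟨S, rfl⟩ := hV
          rw [compl_compl]
          exact mem_finUnions_of_mem ⟨S, rfl⟩
        | univ => rw [Set.compl_univ]; exact empty_mem_finUnions
        | inter V W _ _ ihV ihW => rw [Set.compl_inter]; exact union_mem_finUnions ihV ihW
        | sUnion 𝒮 _ ih =>
          rw [Set.compl_sUnion]
          exact sInter_mem_finUnions hInter hmin (by rintro _ ⟨V, hV, rfl⟩; exact ih V hV)
      have := main Cᶜ hopen
      rwa [compl_compl] at this
    exact finUnions_chains hInter hmin c (fun m => hBclosed (c m) (hclosed m)) hdesc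
  tfae_finish
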